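/- Every iterate X_t of the fixed point iteration X₀ = 0, X_{t+1} = D(X_t) is symmetric positive semidefinite, the matrix I_{rn} + BBᵀ(X_t ⊗ I_r) is invertible for every t, and the sequence is monotonically nondecreasing: X_t ⪯ X_{t+1} for all t ≥ 0. -/

import Mathlib

open Matrix
open scoped Kronecker

/-- The SDARE Riccati operator `D(X) = Aᵀ (X ⊗ I_r) (I + B Bᵀ (X ⊗ I_r))⁻¹ A + Cᵀ C`,
with `rn` realized as the index type `Fin n × Fin r`. -/
noncomputable def Dop {n m l r : ℕ}
    (A : Matrix (Fin n × Fin r) (Fin n) ℝ)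
    (B : Matrix (Fin n × Fin r) (Fin m) ℝ)
    (C : Matrix (Fin l) (Fin n) ℝ)
    (X : Matrix (Fin n) (Fin n) ℝ) : Matrix (Fin n) (Fin n) ℝ :=
  Aᵀ * (X ⊗ₖ (1 : Matrix (Fin r) (Fin r) ℝ)) *
      (1 + B * Bᵀ * (X ⊗ₖ (1 : Matrix (Fin r) (Fin r) ℝ)))⁻¹ * A + Cᵀ * C

section Aux

variable {n m l r : ℕ}

/-- Congruence preserves positive semidefiniteness (real, transpose version). -/
private lemma psd_conj {k k' : Type*} [Fintype k] [Fintype k']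
    {N : Matrix k k ℝ} (hN : N.PosSemidef) (M : Matrix k k' ℝ) :
    (Mᵀ * N * M).PosSemidef := by
  simpa using hN.conjTranspose_mul_mul_same M

private lemma psd_tmul {k k' : Type*} [Fintype k] [Fintype k'] (M : Matrix k k' ℝ) :
    (Mᵀ * M).PosSemidef := by
  simpa using Matrix.posSemidef_conjTranspose_mul_self M

/-- `X ⊗ₖ 1` is PSD when `X` is. -/
private lemma kron_one_psd {X : Matrix (Fin n) (Fin n) ℝ} (hX : X.PosSemidef) :
    (X ⊗ₖ (1 : Matrix (Fin r) (Fin r) ℝ)).PosSemidef := by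
  have hXt : Xᵀ = X := (show X.IsSymm by simpa using hX.1).eq
  rw [posSemidef_iff_dotProduct_mulVec]
  constructor
  · show _ᴴ = _
    simp only [conjTranspose_eq_transpose_of_trivial]
    rw [show (X ⊗ₖ (1 : Matrix (Fin r) (Fin r) ℝ))ᵀ = Xᵀ ⊗ₖ (1 : Matrix (Fin r) (Fin r) ℝ)ᵀ
        from (kroneckerMap_transpose _ _ _).symm, hXt, transpose_one]
  · intro x
    have key : star x ⬝ᵥ ((X ⊗ₖ (1 : Matrix (Fin r) (Fin r) ℝ)) *ᵥ x)
        = ∑ j : Fin r, star (fun i => x (i, j)) ⬝ᵥ (X *ᵥ fun i => x (i, j)) := by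
      simp only [dotProduct, mulVec, kroneckerMap_apply, star_trivial, Pi.star_apply,
        Fintype.sum_prod_type, one_apply, mul_ite, mul_one, mul_zero, ite_mul, zero_mul,
        Finset.sum_ite_eq, Finset.mem_univ, if_true, Finset.mul_sum]
      rw [Finset.sum_comm]
    rw [key]
    exact Finset.sum_nonneg fun j _ => (posSemidef_iff_dotProduct_mulVec.mp hX).2 _

private lemma G_posDef (B : Matrix (Fin n × Fin r) (Fin m) ℝ)
    {X : Matrix (Fin n) (Fin n) ℝ} (hX : X.PosSemidef) :
    (1 + Bᵀ * (X ⊗ₖ (1 : Matrix (Fin r) (Fin r) ℝ)) * B).PosDef :=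
  Matrix.PosDef.add_posSemidef Matrix.PosDef.one (psd_conj (kron_one_psd hX) B)

private lemma unit_one_add (B : Matrix (Fin n × Fin r) (Fin m) ℝ)
    {X : Matrix (Fin n) (Fin n) ℝ} (hX : X.PosSemidef) :
    IsUnit (1 + B * Bᵀ * (X ⊗ₖ (1 : Matrix (Fin r) (Fin r) ℝ))) := by
  rw [Matrix.isUnit_iff_isUnit_det, Matrix.mul_assoc, Matrix.det_one_add_mul_comm]
  exact (G_posDef B hX).det_pos.ne'.isUnit

private lemma woodbury (B : Matrix (Fin n × Fin r) (Fin m) ℝ)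
    {X : Matrix (Fin n) (Fin n) ℝ} (hX : X.PosSemidef) :
    (X ⊗ₖ (1 : Matrix (Fin r) (Fin r) ℝ)) *
        (1 + B * Bᵀ * (X ⊗ₖ (1 : Matrix (Fin r) (Fin r) ℝ)))⁻¹
      = X ⊗ₖ (1 : Matrix (Fin r) (Fin r) ℝ)
        - (X ⊗ₖ (1 : Matrix (Fin r) (Fin r) ℝ)) * B *
            (1 + Bᵀ * (X ⊗ₖ (1 : Matrix (Fin r) (Fin r) ℝ)) * B)⁻¹ *
            (Bᵀ * (X ⊗ₖ (1 : Matrix (Fin r) (Fin r) ℝ))) := by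
  set Y := X ⊗ₖ (1 : Matrix (Fin r) (Fin r) ℝ) with hYdef
  have hGdet : IsUnit (1 + Bᵀ * Y * B).det := (G_posDef B hX).det_pos.ne'.isUnit
  have hGi : (1 + Bᵀ * Y * B)⁻¹ * (1 + Bᵀ * Y * B) = 1 := Matrix.nonsing_inv_mul _ hGdet
  have hU : IsUnit (1 + B * Bᵀ * Y).det :=
    (Matrix.isUnit_iff_isUnit_det _).mp (unit_one_add B hX)
  have key : (Y - Y * B * (1 + Bᵀ * Y * B)⁻¹ * (Bᵀ * Y)) * (1 + B * Bᵀ * Y) = Y := by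
    have expand : (Y - Y * B * (1 + Bᵀ * Y * B)⁻¹ * (Bᵀ * Y)) * (1 + B * Bᵀ * Y)
        = Y + Y * B * (1 - (1 + Bᵀ * Y * B)⁻¹ * (1 + Bᵀ * Y * B)) * (Bᵀ * Y) := by
      simp only [Matrix.mul_add, Matrix.add_mul, Matrix.mul_sub, Matrix.sub_mul,
        Matrix.mul_one, Matrix.one_mul, Matrix.mul_assoc]
      abel
    rw [expand, hGi, sub_self, Matrix.mul_zero, Matrix.zero_mul, add_zero]
  calc Y * (1 + B * Bᵀ * Y)⁻¹
      = ((Y - Y * B * (1 + Bᵀ * Y * B)⁻¹ * (Bᵀ * Y)) * (1 + B * Bᵀ * Y)) *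
          (1 + B * Bᵀ * Y)⁻¹ := by rw [key]
    _ = (Y - Y * B * (1 + Bᵀ * Y * B)⁻¹ * (Bᵀ * Y)) *
          ((1 + B * Bᵀ * Y) * (1 + B * Bᵀ * Y)⁻¹) := by rw [Matrix.mul_assoc]
    _ = _ := by rw [Matrix.mul_nonsing_inv _ hU, Matrix.mul_one]

set_option maxHeartbeats 1000000 in
/-- Completion of squares: the value-iteration identity for the Riccati operator. -/
private lemma key_identity (A : Matrix (Fin n × Fin r) (Fin n) ℝ)
    (B : Matrix (Fin n × Fin r) (Fin m) ℝ) (C : Matrix (Fin l) (Fin n) ℝ)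
    {X : Matrix (Fin n) (Fin n) ℝ} (hX : X.PosSemidef)
    (K : Matrix (Fin m) (Fin n) ℝ) :
    Dop A B C X
      + (K + (1 + Bᵀ * (X ⊗ₖ (1 : Matrix (Fin r) (Fin r) ℝ)) * B)⁻¹ *
            (Bᵀ * (X ⊗ₖ (1 : Matrix (Fin r) (Fin r) ℝ)) * A))ᵀ *
          (1 + Bᵀ * (X ⊗ₖ (1 : Matrix (Fin r) (Fin r) ℝ)) * B) *
          (K + (1 + Bᵀ * (X ⊗ₖ (1 : Matrix (Fin r) (Fin r) ℝ)) * B)⁻¹ *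
            (Bᵀ * (X ⊗ₖ (1 : Matrix (Fin r) (Fin r) ℝ)) * A))
      = (A + B * K)ᵀ * (X ⊗ₖ (1 : Matrix (Fin r) (Fin r) ℝ)) * (A + B * K)
          + Kᵀ * K + Cᵀ * C := by
  set Y := X ⊗ₖ (1 : Matrix (Fin r) (Fin r) ℝ) with hYdef
  have hYt : Yᵀ = Y := by
    have := (kron_one_psd (r := r) hX).1
    exact (show Y.IsSymm by simpa using this).eq
  have hGdet : IsUnit (1 + Bᵀ * Y * B).det := (G_posDef B hX).det_pos.ne'.isUnit
  have hGt : (1 + Bᵀ * Y * B)ᵀ = 1 + Bᵀ * Y * B := by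
    simp [Matrix.transpose_add, Matrix.transpose_mul, Matrix.transpose_transpose, hYt,
      Matrix.mul_assoc]
  have hGi : (1 + Bᵀ * Y * B)⁻¹ * (1 + Bᵀ * Y * B) = 1 := Matrix.nonsing_inv_mul _ hGdet
  have hGG : (1 + Bᵀ * Y * B) * (1 + Bᵀ * Y * B)⁻¹ = 1 := Matrix.mul_nonsing_inv _ hGdet
  have hGit : ((1 + Bᵀ * Y * B)⁻¹)ᵀ = (1 + Bᵀ * Y * B)⁻¹ := by
    rw [Matrix.transpose_nonsing_inv, hGt]
  have e1 : ∀ Z : Matrix (Fin m) (Fin n) ℝ,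
      (1 + Bᵀ * Y * B) * ((1 + Bᵀ * Y * B)⁻¹ * Z) = Z := fun Z => by
    rw [← Matrix.mul_assoc, hGG, Matrix.one_mul]
  have e2 : ∀ Z : Matrix (Fin m) (Fin n) ℝ,
      (1 + Bᵀ * Y * B)⁻¹ * ((1 + Bᵀ * Y * B) * Z) = Z := fun Z => by
    rw [← Matrix.mul_assoc, hGi, Matrix.one_mul]
  unfold Dop
  rw [← hYdef, Matrix.mul_assoc Aᵀ Y _, woodbury B hX, ← hYdef]
  set G := 1 + Bᵀ * Y * B with hGdef
  simp only [Matrix.transpose_add, Matrix.transpose_mul, Matrix.transpose_transpose, hYt,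
    hGit, Matrix.sub_mul, Matrix.mul_sub, Matrix.add_mul, Matrix.mul_add,
    Matrix.mul_one, Matrix.one_mul, Matrix.mul_assoc, e1, e2]
  rw [hGdef]
  simp only [Matrix.add_mul, Matrix.mul_add, Matrix.one_mul, Matrix.mul_assoc]
  abel

private lemma Dop_eq_of_opt (A : Matrix (Fin n × Fin r) (Fin n) ℝ)
    (B : Matrix (Fin n × Fin r) (Fin m) ℝ) (C : Matrix (Fin l) (Fin n) ℝ)
    {X : Matrix (Fin n) (Fin n) ℝ} (hX : X.PosSemidef) :
    Dop A B C X
      = (A + B * (-((1 + Bᵀ * (X ⊗ₖ (1 : Matrix (Fin r) (Fin r) ℝ)) * B)⁻¹ *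
            (Bᵀ * (X ⊗ₖ (1 : Matrix (Fin r) (Fin r) ℝ)) * A))))ᵀ *
          (X ⊗ₖ (1 : Matrix (Fin r) (Fin r) ℝ)) *
          (A + B * (-((1 + Bᵀ * (X ⊗ₖ (1 : Matrix (Fin r) (Fin r) ℝ)) * B)⁻¹ *
            (Bᵀ * (X ⊗ₖ (1 : Matrix (Fin r) (Fin r) ℝ)) * A))))
        + (-((1 + Bᵀ * (X ⊗ₖ (1 : Matrix (Fin r) (Fin r) ℝ)) * B)⁻¹ *
            (Bᵀ * (X ⊗ₖ (1 : Matrix (Fin r) (Fin r) ℝ)) * A)))ᵀ *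
          (-((1 + Bᵀ * (X ⊗ₖ (1 : Matrix (Fin r) (Fin r) ℝ)) * B)⁻¹ *
            (Bᵀ * (X ⊗ₖ (1 : Matrix (Fin r) (Fin r) ℝ)) * A)))
        + Cᵀ * C := by
  have h := key_identity A B C hX
    (-((1 + Bᵀ * (X ⊗ₖ (1 : Matrix (Fin r) (Fin r) ℝ)) * B)⁻¹ *
        (Bᵀ * (X ⊗ₖ (1 : Matrix (Fin r) (Fin r) ℝ)) * A)))
  simp only [neg_add_cancel, Matrix.transpose_zero, Matrix.zero_mul, Matrix.mul_zero,
    add_zero] at h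
  exact h

private lemma Dop_psd (A : Matrix (Fin n × Fin r) (Fin n) ℝ)
    (B : Matrix (Fin n × Fin r) (Fin m) ℝ) (C : Matrix (Fin l) (Fin n) ℝ)
    {X : Matrix (Fin n) (Fin n) ℝ} (hX : X.PosSemidef) :
    (Dop A B C X).PosSemidef := by
  rw [Dop_eq_of_opt A B C hX]
  exact (((psd_conj (kron_one_psd hX) _).add (psd_tmul _)).add (psd_tmul _))

private lemma sub_kron (X₁ X₂ : Matrix (Fin n) (Fin n) ℝ) :
    (X₂ - X₁) ⊗ₖ (1 : Matrix (Fin r) (Fin r) ℝ)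
      = X₂ ⊗ₖ (1 : Matrix (Fin r) (Fin r) ℝ) - X₁ ⊗ₖ (1 : Matrix (Fin r) (Fin r) ℝ) := by
  ext ⟨i, j⟩ ⟨i', j'⟩
  simp [Matrix.kroneckerMap_apply, Matrix.sub_apply, sub_mul]

set_option maxHeartbeats 1000000 in
private lemma Dop_mono (A : Matrix (Fin n × Fin r) (Fin n) ℝ)
    (B : Matrix (Fin n × Fin r) (Fin m) ℝ) (C : Matrix (Fin l) (Fin n) ℝ)
    {X₁ X₂ : Matrix (Fin n) (Fin n) ℝ} (hX₁ : X₁.PosSemidef) (hX₂ : X₂.PosSemidef)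
    (hD : (X₂ - X₁).PosSemidef) :
    (Dop A B C X₂ - Dop A B C X₁).PosSemidef := by
  set K := -((1 + Bᵀ * (X₂ ⊗ₖ (1 : Matrix (Fin r) (Fin r) ℝ)) * B)⁻¹ *
      (Bᵀ * (X₂ ⊗ₖ (1 : Matrix (Fin r) (Fin r) ℝ)) * A)) with hK
  have h2 : Dop A B C X₂
      = (A + B * K)ᵀ * (X₂ ⊗ₖ (1 : Matrix (Fin r) (Fin r) ℝ)) * (A + B * K)
          + Kᵀ * K + Cᵀ * C := by
    have h := key_identity A B C hX₂ K
    rw [hK] at h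
    simp only [neg_add_cancel, Matrix.transpose_zero, Matrix.zero_mul, Matrix.mul_zero,
      add_zero] at h
    rw [← hK] at h
    exact h
  have h1 := key_identity A B C (X := X₁) hX₁ K
  have hsub : Dop A B C X₂ - Dop A B C X₁
      = (A + B * K)ᵀ * ((X₂ - X₁) ⊗ₖ (1 : Matrix (Fin r) (Fin r) ℝ)) * (A + B * K)
        + (K + (1 + Bᵀ * (X₁ ⊗ₖ (1 : Matrix (Fin r) (Fin r) ℝ)) * B)⁻¹ *
              (Bᵀ * (X₁ ⊗ₖ (1 : Matrix (Fin r) (Fin r) ℝ)) * A))ᵀ *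
            (1 + Bᵀ * (X₁ ⊗ₖ (1 : Matrix (Fin r) (Fin r) ℝ)) * B) *
            (K + (1 + Bᵀ * (X₁ ⊗ₖ (1 : Matrix (Fin r) (Fin r) ℝ)) * B)⁻¹ *
              (Bᵀ * (X₁ ⊗ₖ (1 : Matrix (Fin r) (Fin r) ℝ)) * A)) := by
    have h1' : Dop A B C X₁
        = (A + B * K)ᵀ * (X₁ ⊗ₖ (1 : Matrix (Fin r) (Fin r) ℝ)) * (A + B * K)
            + Kᵀ * K + Cᵀ * C
          - (K + (1 + Bᵀ * (X₁ ⊗ₖ (1 : Matrix (Fin r) (Fin r) ℝ)) * B)⁻¹ *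
                (Bᵀ * (X₁ ⊗ₖ (1 : Matrix (Fin r) (Fin r) ℝ)) * A))ᵀ *
              (1 + Bᵀ * (X₁ ⊗ₖ (1 : Matrix (Fin r) (Fin r) ℝ)) * B) *
              (K + (1 + Bᵀ * (X₁ ⊗ₖ (1 : Matrix (Fin r) (Fin r) ℝ)) * B)⁻¹ *
                (Bᵀ * (X₁ ⊗ₖ (1 : Matrix (Fin r) (Fin r) ℝ)) * A)) :=
      eq_sub_of_add_eq h1
    rw [h2, h1', sub_kron]
    simp only [Matrix.mul_sub, Matrix.sub_mul]
    abel
  rw [hsub]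
  exact (psd_conj (kron_one_psd hD) _).add (psd_conj (G_posDef B hX₁).posSemidef _)

end Aux

theorem stmt1 {n m l r : ℕ} (hn : 0 < n) (hm : 0 < m) (hl : 0 < l) (hr : 0 < r)
    (A : Matrix (Fin n × Fin r) (Fin n) ℝ)
    (B : Matrix (Fin n × Fin r) (Fin m) ℝ)
    (C : Matrix (Fin l) (Fin n) ℝ)
    (Xseq : ℕ → Matrix (Fin n) (Fin n) ℝ)
    (h0 : Xseq 0 = 0)
    (hstep : ∀ t, Xseq (t + 1) = Dop A B C (Xseq t)) :
    ∀ t, (Xseq t).PosSemidef ∧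
      IsUnit (1 + B * Bᵀ * (Xseq t ⊗ₖ (1 : Matrix (Fin r) (Fin r) ℝ))) ∧
      (Xseq (t + 1) - Xseq t).PosSemidef := by
  have main : ∀ t, (Xseq t).PosSemidef ∧ (Xseq (t + 1) - Xseq t).PosSemidef := by
    intro t
    induction t with
    | zero =>
      constructor
      · rw [h0]; exact Matrix.PosSemidef.zero
      · rw [hstep 0, h0, sub_zero]
        exact Dop_psd A B C Matrix.PosSemidef.zero
    | succ t ih =>
      have hpsd : (Xseq (t + 1)).PosSemidef := by
        rw [hstep t]; exact Dop_psd A B C ih.1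
      refine ⟨hpsd, ?_⟩
      have := Dop_mono A B C ih.1 hpsd ih.2
      rwa [← hstep (t + 1), ← hstep t] at this
  intro t
  exact ⟨(main t).1, unit_one_add B (main t).1, (main t).2⟩
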